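/- Let Y be a finite set, μ a probability distribution on Y with μ(y) > 0 for all y, η > 0, and f_1,…,f_T: Y → ℝ. Define ℓ(π) = η·D_KL(π || μ), π_1 = μ, and for t ≥ 1 let π_{t+1}(y) ∝ π_t(y)·exp(f_t(y)/η). Then for every probability distribution π on Y: Σ_{t=1}^T ⟨π − π_t, f_t⟩ ≤ Σ_{t=1}^T ⟨π_{t+1} − π_t, f_t⟩ − ℓ(π_1) + ℓ(π), where ⟨p, f⟩ = Σ_{y∈Y} p(y)·f(y). -/
import Mathlib


open Finset

private lemma gibbs_aux {Y : Type*} [Fintype Y] (p q : Y → ℝ)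
    (hp : ∀ y, 0 ≤ p y) (hq : ∀ y, 0 < q y)
    (hp1 : ∑ y, p y = 1) (hq1 : ∑ y, q y = 1) :
    0 ≤ ∑ y, p y * (Real.log (p y) - Real.log (q y)) := by
  have key : ∀ y, p y - q y ≤ p y * (Real.log (p y) - Real.log (q y)) := by
    intro y
    rcases eq_or_lt_of_le (hp y) with h | h
    · rw [← h]
      simp
      linarith [(hq y).le]
    · have hlog : Real.log (q y / p y) ≤ q y / p y - 1 :=
        Real.log_le_sub_one_of_pos (div_pos (hq y) h)
      have h1 : Real.log (q y) - Real.log (p y) ≤ q y / p y - 1 := by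
        rwa [Real.log_div (hq y).ne' h.ne'] at hlog
      have h2 := mul_le_mul_of_nonneg_left h1 h.le
      have h3 : p y * (q y / p y - 1) = q y - p y := by field_simp
      nlinarith
  calc (0:ℝ) = ∑ y, (p y - q y) := by rw [Finset.sum_sub_distrib, hp1, hq1]; ring
  _ ≤ _ := Finset.sum_le_sum (fun y _ => key y)

private lemma tele_aux (g : ℕ → ℝ) (T : ℕ) :
    ∑ t ∈ Finset.Icc 1 T, (g (t + 1) - g t) = g (T + 1) - g 1 := by
  induction T with
  | zero => simp
  | succ n ih => rw [Finset.sum_Icc_succ_top (by omega), ih]; ring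

/-- (Lemma "no-regret-2") With `ℓ(π) = η·D_KL(π‖μ)`, `π_1 = μ`
and `π_{t+1}(y) ∝ π_t(y)·exp(f_t(y)/η)` for all `t ≥ 1`, every distribution `π`
on `Y` satisfies
`Σ_{t=1}^T ⟨π − π_t, f_t⟩ ≤ Σ_{t=1}^T ⟨π_{t+1} − π_t, f_t⟩ − ℓ(π_1) + ℓ(π)`. -/
theorem regret_comparison {Y : Type*} [Fintype Y]
    (μ : Y → ℝ) (hμ0 : ∀ y, 0 < μ y) (hμ1 : ∑ y, μ y = 1)
    (η : ℝ) (hη : 0 < η) (T : ℕ)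
    (f : ℕ → Y → ℝ)
    (πs : ℕ → Y → ℝ)
    (hinit : πs 1 = μ)
    (hrec : ∀ t, 1 ≤ t → ∀ y,
      πs (t + 1) y = πs t y * Real.exp (f t y / η)
        / ∑ y', πs t y' * Real.exp (f t y' / η)) :
    ∀ π : Y → ℝ, (∀ y, 0 ≤ π y) → (∑ y, π y = 1) →
      ∑ t ∈ Finset.Icc 1 T, ∑ y, (π y - πs t y) * f t y
        ≤ (∑ t ∈ Finset.Icc 1 T, ∑ y, (πs (t + 1) y - πs t y) * f t y)
          - η * (∑ y, πs 1 y * Real.log (πs 1 y / μ y))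
          + η * ∑ y, π y * Real.log (π y / μ y) := by
  intro π hπ0 hπ1
  rcases isEmpty_or_nonempty Y with hY | hY
  · simp at hμ1
  -- positivity and normalization of the iterates
  have hps : ∀ t, 1 ≤ t → (∀ y, 0 < πs t y) ∧ (∑ y, πs t y) = 1 := by
    intro t ht
    induction t with
    | zero => omega
    | succ n ih =>
      rcases Nat.lt_or_ge 1 (n + 1) with h | h
      · have hn : 1 ≤ n := by omega
        obtain ⟨hpos, hsum⟩ := ih hn
        have hZ : 0 < ∑ y', πs n y' * Real.exp (f n y' / η) :=
          Finset.sum_pos (fun y _ => mul_pos (hpos y) (Real.exp_pos _))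
            Finset.univ_nonempty
        constructor
        · intro y
          rw [hrec n hn y]
          exact div_pos (mul_pos (hpos y) (Real.exp_pos _)) hZ
        · rw [Finset.sum_congr rfl (fun y _ => hrec n hn y), ← Finset.sum_div,
            div_self hZ.ne']
      · have : n + 1 = 1 := by omega
        rw [this, hinit]
        exact ⟨hμ0, hμ1⟩
  -- key identity for f t y
  have hlog : ∀ t, 1 ≤ t → ∀ y,
      f t y = η * (Real.log (πs (t + 1) y) - Real.log (πs t y))
        + η * Real.log (∑ y', πs t y' * Real.exp (f t y' / η)) := by
    intro t ht y
    have hpos := (hps t ht).1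
    have hZ : 0 < ∑ y', πs t y' * Real.exp (f t y' / η) :=
      Finset.sum_pos (fun y _ => mul_pos (hpos y) (Real.exp_pos _))
        Finset.univ_nonempty
    have : Real.log (πs (t + 1) y)
        = Real.log (πs t y) + f t y / η
          - Real.log (∑ y', πs t y' * Real.exp (f t y' / η)) := by
      rw [hrec t ht y, Real.log_div (mul_pos (hpos y) (Real.exp_pos _)).ne' hZ.ne',
        Real.log_mul (hpos y).ne' (Real.exp_pos _).ne', Real.log_exp]
    rw [this]
    field_simp
    ring
  -- per-step bound
  have step : ∀ t ∈ Finset.Icc 1 T,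
      ∑ y, (π y - πs (t + 1) y) * f t y
        ≤ η * ∑ y, π y * (Real.log (πs (t + 1) y) - Real.log (πs t y)) := by
    intro t ht
    have ht1 : 1 ≤ t := (Finset.mem_Icc.mp ht).1
    set Z := ∑ y', πs t y' * Real.exp (f t y' / η) with hZdef
    have hsum' : ∑ y, πs (t + 1) y = 1 := (hps (t + 1) (by omega)).2
    have e1 : ∑ y, (π y - πs (t + 1) y) * f t y
        = η * ∑ y, (π y - πs (t + 1) y)
            * (Real.log (πs (t + 1) y) - Real.log (πs t y)) := by
      have : ∀ y, (π y - πs (t + 1) y) * f t y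
          = η * ((π y - πs (t + 1) y)
              * (Real.log (πs (t + 1) y) - Real.log (πs t y)))
            + (π y - πs (t + 1) y) * (η * Real.log Z) := by
        intro y
        rw [hlog t ht1 y]
        ring
      rw [Finset.sum_congr rfl (fun y _ => this y), Finset.sum_add_distrib,
        ← Finset.sum_mul, Finset.sum_sub_distrib, hπ1, hsum', Finset.mul_sum]
      ring
    have hg : 0 ≤ ∑ y, πs (t + 1) y
        * (Real.log (πs (t + 1) y) - Real.log (πs t y)) :=
      gibbs_aux (πs (t + 1)) (πs t) (fun y => ((hps (t + 1) (by omega)).1 y).le)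
        (hps t ht1).1 hsum' (hps t ht1).2
    have e2 : ∑ y, (π y - πs (t + 1) y)
        * (Real.log (πs (t + 1) y) - Real.log (πs t y))
        = (∑ y, π y * (Real.log (πs (t + 1) y) - Real.log (πs t y)))
          - ∑ y, πs (t + 1) y * (Real.log (πs (t + 1) y) - Real.log (πs t y)) := by
      rw [← Finset.sum_sub_distrib]
      exact Finset.sum_congr rfl (fun y _ => by ring)
    rw [e1, e2]
    have := mul_le_mul_of_nonneg_left (by linarith :
      (∑ y, π y * (Real.log (πs (t + 1) y) - Real.log (πs t y)))
        - ∑ y, πs (t + 1) y * (Real.log (πs (t + 1) y) - Real.log (πs t y))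
        ≤ ∑ y, π y * (Real.log (πs (t + 1) y) - Real.log (πs t y))) hη.le
    linarith
  -- telescoping
  have tel : ∑ t ∈ Finset.Icc 1 T,
      ∑ y, π y * (Real.log (πs (t + 1) y) - Real.log (πs t y))
      = ∑ y, π y * (Real.log (πs (T + 1) y) - Real.log (πs 1 y)) := by
    rw [Finset.sum_comm]
    refine Finset.sum_congr rfl (fun y _ => ?_)
    rw [← Finset.mul_sum, tele_aux (fun t => Real.log (πs t y)) T]
  -- final bound on the telescoped term
  have hfinal : ∑ y, π y * (Real.log (πs (T + 1) y) - Real.log (πs 1 y))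
      ≤ ∑ y, π y * Real.log (π y / μ y) := by
    have hposT := (hps (T + 1) (by omega)).1
    have hg : 0 ≤ ∑ y, π y * (Real.log (π y) - Real.log (πs (T + 1) y)) :=
      gibbs_aux π (πs (T + 1)) hπ0 hposT hπ1 (hps (T + 1) (by omega)).2
    have e3 : ∑ y, π y * (Real.log (π y) - Real.log (μ y))
        = ∑ y, π y * Real.log (π y / μ y) := by
      refine Finset.sum_congr rfl (fun y _ => ?_)
      rcases eq_or_lt_of_le (hπ0 y) with h | h
      · rw [← h]; ring
      · rw [Real.log_div h.ne' (hμ0 y).ne']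
    have e4 : ∀ y, π y * (Real.log (πs (T + 1) y) - Real.log (πs 1 y))
        = π y * (Real.log (π y) - Real.log (μ y))
          - π y * (Real.log (π y) - Real.log (πs (T + 1) y)) := by
      intro y; rw [hinit]; ring
    rw [Finset.sum_congr rfl (fun y _ => e4 y), Finset.sum_sub_distrib, e3]
    linarith
  -- initial KL term vanishes
  have hzero : ∑ y, πs 1 y * Real.log (πs 1 y / μ y) = 0 := by
    rw [hinit]
    refine Finset.sum_eq_zero (fun y _ => ?_)
    rw [div_self (hμ0 y).ne', Real.log_one, mul_zero]
  -- assemble everything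
  have hS : ∑ t ∈ Finset.Icc 1 T, ∑ y, (π y - πs (t + 1) y) * f t y
      ≤ η * ∑ y, π y * Real.log (π y / μ y) := by
    calc ∑ t ∈ Finset.Icc 1 T, ∑ y, (π y - πs (t + 1) y) * f t y
        ≤ ∑ t ∈ Finset.Icc 1 T,
            η * ∑ y, π y * (Real.log (πs (t + 1) y) - Real.log (πs t y)) :=
          Finset.sum_le_sum step
      _ = η * ∑ y, π y * (Real.log (πs (T + 1) y) - Real.log (πs 1 y)) := by
          rw [← Finset.mul_sum, tel]
      _ ≤ η * ∑ y, π y * Real.log (π y / μ y) :=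
          mul_le_mul_of_nonneg_left hfinal hη.le
  have hAB : (∑ t ∈ Finset.Icc 1 T, ∑ y, (π y - πs t y) * f t y)
      - (∑ t ∈ Finset.Icc 1 T, ∑ y, (πs (t + 1) y - πs t y) * f t y)
      = ∑ t ∈ Finset.Icc 1 T, ∑ y, (π y - πs (t + 1) y) * f t y := by
    rw [← Finset.sum_sub_distrib]
    refine Finset.sum_congr rfl (fun t _ => ?_)
    rw [← Finset.sum_sub_distrib]
    exact Finset.sum_congr rfl (fun y _ => by ring)
  rw [hzero]
  linarith
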